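/- For each error ball B ∈ {B^D, B^I, B^DI}, there exist real constants c1, c2 and an even integer n0 such that for every even n ≥ n0, (3/2)·log2 n + c1 ≤ ρ_b(n,1;B) ≤ (3/2)·log2 n + c2. -/

import Mathlib

namespace BRC

/-- Hamming distance between two binary words (of the same length). -/
def hammingDist (x y : List Bool) : ℕ :=
  (List.zip x y).countP (fun p => p.1 != p.2)

/-- `balanced n` is the set `U_n` of binary words of length `n` with exactly `n/2` ones. -/
def balanced (n : ℕ) : Set (List Bool) :=
  {x | x.length = n ∧ x.count true = n / 2}

/-- `B^S(x)`: words obtained from `x` by at most one substitution. -/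
def BS (x : List Bool) : Set (List Bool) :=
  {y | y.length = x.length ∧ hammingDist x y ≤ 1}

/-- `B^D(x)`: words obtained from `x` by deleting one symbol. -/
def BD (x : List Bool) : Set (List Bool) :=
  {y | ∃ (u v : List Bool) (b : Bool), x = u ++ b :: v ∧ y = u ++ v}

/-- `B^I(x)`: words obtained from `x` by inserting one symbol. -/
def BI (x : List Bool) : Set (List Bool) :=
  {y | ∃ (u v : List Bool) (b : Bool), x = u ++ v ∧ y = u ++ b :: v}

def BDI (x : List Bool) : Set (List Bool) := BD x ∪ BI x
def BSD (x : List Bool) : Set (List Bool) := BS x ∪ BD x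
def BSI (x : List Bool) : Set (List Bool) := BS x ∪ BI x
def Bedit (x : List Bool) : Set (List Bool) := BS x ∪ BD x ∪ BI x

/-- `C` is a balanced `(n,N;B)`-reconstruction code: `C ⊆ U_n` and `ν(C;B) < N`. -/
def reconCode (n N : ℕ) (B : List Bool → Set (List Bool)) (C : Set (List Bool)) : Prop :=
  C ⊆ balanced n ∧ ∀ x ∈ C, ∀ y ∈ C, x ≠ y → (B x ∩ B y).ncard < N

/-- `ρ_b(n,N;B)`: optimal redundancy of a balanced `(n,N;B)`-reconstruction code. -/
noncomputable def rho (n N : ℕ) (B : List Bool → Set (List Bool)) : ℝ :=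
  sInf {r : ℝ | ∃ C : Set (List Bool),
    reconCode n N B C ∧ r = (n : ℝ) - Real.logb 2 (C.ncard : ℝ)}

/-- `(10)^m`. -/
def pat10 (m : ℕ) : List Bool := (List.replicate m [true, false]).flatten
/-- `(01)^m`. -/
def pat01 (m : ℕ) : List Bool := (List.replicate m [false, true]).flatten

/-- Type-A-confusable with parameter `m`: `{c, c'} = {(10)^m, (01)^m}`. -/
def TypeAWith (m : ℕ) (x y : List Bool) : Prop :=
  ∃ u v : List Bool,
    (x = u ++ pat10 m ++ v ∧ y = u ++ pat01 m ++ v) ∨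
    (x = u ++ pat01 m ++ v ∧ y = u ++ pat10 m ++ v)

/-- Type-A-confusable (with some `m ≥ 1`). -/
def TypeA (x y : List Bool) : Prop := ∃ m, 1 ≤ m ∧ TypeAWith m x y

/-- Type-B-confusable with parameter `m`:
`{c, c'} = {0 1^m, 1^m 0}` or `{c, c'} = {1 0^m, 0^m 1}`. -/
def TypeBWith (m : ℕ) (x y : List Bool) : Prop :=
  ∃ u v : List Bool,
    ((x = u ++ (false :: List.replicate m true) ++ v ∧
        y = u ++ (List.replicate m true ++ [false]) ++ v) ∨
     (x = u ++ (List.replicate m true ++ [false]) ++ v ∧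
        y = u ++ (false :: List.replicate m true) ++ v)) ∨
    ((x = u ++ (true :: List.replicate m false) ++ v ∧
        y = u ++ (List.replicate m false ++ [true]) ++ v) ∨
     (x = u ++ (List.replicate m false ++ [true]) ++ v ∧
        y = u ++ (true :: List.replicate m false) ++ v))

/-- Type-B-confusable (with some `m ≥ 2`). -/
def TypeB (x y : List Bool) : Prop := ∃ m, 2 ≤ m ∧ TypeBWith m x y

/-- Number of runs of a binary word. -/
def numRuns (x : List Bool) : ℕ := (x.destutter (· ≠ ·)).length

/-- `V_{n-1}`: binary words of length `n-1` with Hamming weight `n/2` or `n/2 - 1`. -/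
def Vset (n : ℕ) : Set (List Bool) :=
  {x | x.length = n - 1 ∧ (x.count true = n / 2 ∨ x.count true = n / 2 - 1)}

/-- VT weighted sum `Σ_{i=1}^n i·x_i` (positions indexed from 1). -/
def vtSum (x : List Bool) : ℕ :=
  ((x.zipIdx.map Prod.swap).map (fun p => if p.2 then p.1 + 1 else 0)).sum

/-- The balanced Varshamov–Tenengolts code `BVT_a(n)`. -/
def BVT (n a : ℕ) : Set (List Bool) :=
  {x | x ∈ balanced n ∧ vtSum x ≡ a [MOD n + 1]}

/-- `R_2^b(n,1,m)`: balanced words of length `n` all of whose runs have length at most `m`. -/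
def R1 (n m : ℕ) : Set (List Bool) :=
  {x | x ∈ balanced n ∧ ∀ b : Bool, ¬ (List.replicate (m + 1) b <:+: x)}


/-- Finset of length-`m` binary words with exactly `k` ones. -/
def W : ℕ → ℕ → Finset (List Bool)
  | 0, 0 => {[]}
  | 0, _+1 => ∅
  | m+1, 0 => (W m 0).image (false :: ·)
  | m+1, k+1 => (W m (k+1)).image (false :: ·) ∪ (W m k).image (true :: ·)

lemma mem_W : ∀ (m k : ℕ) (x : List Bool), x ∈ W m k ↔ x.length = m ∧ x.count true = k := by
  intro m
  induction m with
  | zero =>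
    intro k x
    cases k with
    | zero =>
      simp [W, List.length_eq_zero_iff]
      rintro rfl; simp
    | succ k => simp [W]; rintro rfl h; simp at h
  | succ m ih =>
    intro k x
    cases k with
    | zero =>
      simp only [W, Finset.mem_image]
      constructor
      · rintro ⟨y, hy, rfl⟩
        obtain ⟨h1, h2⟩ := (ih 0 y).1 hy
        simp [h1, h2]
      · intro ⟨h1, h2⟩
        cases x with
        | nil => simp at h1
        | cons b t =>
          cases b with
          | false =>
            refine ⟨t, (ih 0 t).2 ⟨by simpa using h1, by simpa using h2⟩, rfl⟩
          | true => simp at h2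
    | succ k =>
      simp only [W, Finset.mem_union, Finset.mem_image]
      constructor
      · rintro (⟨y, hy, rfl⟩ | ⟨y, hy, rfl⟩)
        · obtain ⟨h1, h2⟩ := (ih (k+1) y).1 hy
          simp [h1, h2]
        · obtain ⟨h1, h2⟩ := (ih k y).1 hy
          simp [h1, h2]
      · intro ⟨h1, h2⟩
        cases x with
        | nil => simp at h1
        | cons b t =>
          cases b with
          | false =>
            exact Or.inl ⟨t, (ih (k+1) t).2 ⟨by simpa using h1, by simpa using h2⟩, rfl⟩
          | true =>
            exact Or.inr ⟨t, (ih k t).2 ⟨by simpa using h1, by simpa using h2⟩, rfl⟩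

lemma card_W : ∀ m k, (W m k).card = m.choose k := by
  intro m
  induction m with
  | zero => intro k; cases k <;> simp [W]
  | succ m ih =>
    intro k
    cases k with
    | zero =>
      rw [W, Finset.card_image_of_injective _ (by intro a b h; simpa using h)]
      simp [ih]
    | succ k =>
      rw [W, Finset.card_union_of_disjoint, Finset.card_image_of_injective _ (by intro a b h; simpa using h), Finset.card_image_of_injective _ (by intro a b h; simpa using h), ih, ih, Nat.choose_succ_succ]
      · ring
      · simp only [Finset.disjoint_left, Finset.mem_image]
        rintro a ⟨y, _, rfl⟩ ⟨z, _, h⟩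
        simp at h

lemma balanced_eq_W (n : ℕ) : balanced n = ↑(W n (n / 2)) := by
  ext x; simp [balanced, mem_W]


lemma enumFrom_sum (l : List Bool) : ∀ s : ℕ,
    (((l.zipIdx s).map Prod.swap).map (fun p => if p.2 then p.1 + 1 else 0)).sum
      = (((l.zipIdx 0).map Prod.swap).map (fun p => if p.2 then p.1 + 1 else 0)).sum + s * l.count true := by
  induction l with
  | nil => simp
  | cons b t ih =>
    intro s
    simp only [List.zipIdx_cons, List.map_cons, Prod.swap_prod_mk, List.sum_cons, ih (s+1), ih 1,
      List.count_cons]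
    cases b <;> simp <;> ring

lemma vtSum_cons (b : Bool) (t : List Bool) :
    vtSum (b :: t) = (if b then 1 else 0) + vtSum t + t.count true := by
  simp only [vtSum, List.zipIdx_cons, Nat.zero_add, List.map_cons, Prod.swap_prod_mk, List.sum_cons,
    enumFrom_sum t 1]
  cases b <;> simp <;> ring

lemma vtSum_append (u v : List Bool) :
    vtSum (u ++ v) = vtSum u + vtSum v + u.length * v.count true := by
  induction u with
  | nil => simp [vtSum]
  | cons b t ih =>
    simp only [List.cons_append, vtSum_cons, ih, List.count_append, List.length_cons]
    ring

/-- Key ordered case of Levenshtein's argument. -/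
lemma vt_key {n a : ℕ} {u₁ v₁ u₂ v₂ : List Bool} {b₁ b₂ : Bool}
    (hlen : u₁.length ≤ u₂.length) (hz : u₁ ++ v₁ = u₂ ++ v₂)
    (hx : (u₁ ++ b₁ :: v₁) ∈ BVT n a) (hy : (u₂ ++ b₂ :: v₂) ∈ BVT n a) :
    u₁ ++ b₁ :: v₁ = u₂ ++ b₂ :: v₂ := by
  obtain ⟨w, hu₂, hv₁⟩ : ∃ w, u₂ = u₁ ++ w ∧ v₁ = w ++ v₂ := by
    rcases List.append_eq_append_iff.1 hz with ⟨w, h1, h2⟩ | ⟨w, h1, h2⟩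
    · exact ⟨w, h1, h2⟩
    · have : w = [] := by
        have := congrArg List.length h1
        simp at this
        exact List.eq_nil_of_length_eq_zero (by omega)
      subst this
      simp at h1 h2
      exact ⟨[], by simp [h1], by simp [h2]⟩
  subst hu₂ hv₁
  obtain ⟨⟨hlx, hcx⟩, hvx⟩ := hx
  obtain ⟨⟨hly, hcy⟩, hvy⟩ := hy
  -- counts force b₁ = b₂
  have hb : b₁ = b₂ := by
    simp only [List.count_append, List.count_cons] at hcx hcy
    cases b₁ <;> cases b₂ <;> simp_all <;> omega
  subst hb
  -- w length bound
  have hwlen : w.length ≤ n := by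
    have h := hlx
    simp [List.length_append] at h
    omega
  -- vt sums
  set bb : ℕ := if b₁ then 1 else 0 with hbb
  set cw := w.count true with hcw
  have e : vtSum (u₁ ++ b₁ :: (w ++ v₂)) + w.length * bb
      = vtSum ((u₁ ++ w) ++ b₁ :: v₂) + cw := by
    rw [vtSum_append, vtSum_append, vtSum_append, vtSum_cons, vtSum_cons, vtSum_append]
    simp only [List.count_append, List.count_cons, List.length_append]
    cases b₁ <;> simp [hbb, hcw] <;> ring
  have h1 : vtSum (u₁ ++ b₁ :: (w ++ v₂)) ≡ vtSum ((u₁ ++ w) ++ b₁ :: v₂) [MOD n+1] := by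
    have hvx' : vtSum (u₁ ++ b₁ :: (w ++ v₂)) ≡ a [MOD n+1] := by
      simpa using hvx
    exact hvx'.trans hvy.symm
  have h2 : w.length * bb ≡ cw [MOD n+1] :=
    Nat.ModEq.add_left_cancel h1 (by rw [e])
  have hcw_le : cw ≤ w.length := by simpa [hcw] using List.count_le_length (a := true) (l := w)
  have hbb_le : w.length * bb ≤ w.length := by
    cases b₁ <;> simp [hbb]
  have heq : w.length * bb = cw := by
    have := h2
    unfold Nat.ModEq at this
    rw [Nat.mod_eq_of_lt (by omega), Nat.mod_eq_of_lt (by omega)] at this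
    exact this
  -- conclude w is constant
  have hrepl : w = List.replicate w.length b₁ := by
    cases b₁ with
    | false =>
      simp [hbb] at heq
      refine List.eq_replicate_of_mem ?_
      intro c hc
      by_contra hcne
      have : c = true := by cases c <;> simp_all
      subst this
      have := List.count_pos_iff.2 hc
      omega
    | true =>
      simp [hbb] at heq
      refine List.eq_replicate_of_mem ?_
      intro c hc
      by_contra hcne
      have : c = false := by cases c <;> simp_all
      subst this
      have hct : w.count true < w.length := by
        have h3 := List.count_le_length (a := true) (l := w)
        rcases List.mem_iff_append.1 hc  with ⟨p, q, rfl⟩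
        simp [List.count_append, List.count_cons, List.length_append]
        have hp := List.count_le_length (a := true) (l := p)
        have hq := List.count_le_length (a := true) (l := q)
        omega
      omega
  -- finish: b₁ :: w = w ++ [b₁]
  have : b₁ :: w = w ++ [b₁] := by
    conv_lhs => rw [hrepl]
    conv_rhs => rw [hrepl]
    rw [← List.replicate_succ, ← List.replicate_succ']
  calc u₁ ++ b₁ :: (w ++ v₂) = u₁ ++ (b₁ :: w) ++ v₂ := by simp
    _ = u₁ ++ (w ++ [b₁]) ++ v₂ := by rw [this]
    _ = (u₁ ++ w) ++ b₁ :: v₂ := by simp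

/-- The balanced VT code corrects a single deletion. -/
lemma bvt_del_disjoint {n a : ℕ} {x y : List Bool}
    (hx : x ∈ BVT n a) (hy : y ∈ BVT n a) (hxy : x ≠ y) : BD x ∩ BD y = ∅ := by
  by_contra h
  obtain ⟨z, ⟨u₁, v₁, b₁, hx1, hz1⟩, ⟨u₂, v₂, b₂, hy1, hz2⟩⟩ :=
    Set.nonempty_iff_ne_empty.2 h
  subst hx1 hy1
  have hz : u₁ ++ v₁ = u₂ ++ v₂ := by rw [← hz1, ← hz2]
  rcases le_total u₁.length u₂.length with hle | hle
  · exact hxy (vt_key hle hz hx hy)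
  · exact hxy (vt_key hle hz.symm hy hx).symm


lemma BD_length {x z : List Bool} (h : z ∈ BD x) : z.length + 1 = x.length := by
  obtain ⟨u, v, b, rfl, rfl⟩ := h; simp; omega

lemma BI_length {x z : List Bool} (h : z ∈ BI x) : z.length = x.length + 1 := by
  obtain ⟨u, v, b, rfl, rfl⟩ := h; simp; omega

lemma eraseIdx_append_cons (u v : List Bool) (b : Bool) :
    (u ++ b :: v).eraseIdx u.length = u ++ v := by
  rw [List.eraseIdx_eq_take_drop_succ]
  congr 1
  · exact List.take_left
  · have h1 : u.length + 1 = (u ++ [b]).length := by simp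
    have h2 : u ++ b :: v = (u ++ [b]) ++ v := by simp
    rw [h1, h2, List.drop_left]

lemma eraseIdx_mem_BD {x : List Bool} {i : ℕ} (h : i < x.length) : x.eraseIdx i ∈ BD x := by
  refine ⟨x.take i, x.drop (i+1), x[i], ?_, List.eraseIdx_eq_take_drop_succ x i⟩
  conv_lhs => rw [← List.take_append_drop i x]
  rw [List.getElem_cons_drop]

lemma BD_subset_image (x : List Bool) :
    BD x ⊆ (fun i => x.eraseIdx i) '' (Set.Iio x.length) := by
  rintro z ⟨u, v, b, rfl, rfl⟩
  exact ⟨u.length, by simp, eraseIdx_append_cons u v b⟩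

lemma BD_finite (x : List Bool) : (BD x).Finite :=
  Set.Finite.subset ((Set.finite_Iio _).image _) (BD_subset_image x)

lemma BI_finite (x : List Bool) : (BI x).Finite := by
  have : BI x ⊆ (fun p : ℕ × Bool => (x.take p.1) ++ p.2 :: (x.drop p.1)) ''
      ((Set.Iio (x.length + 1)) ×ˢ Set.univ) := by
    rintro z ⟨u, v, b, rfl, rfl⟩
    refine ⟨(u.length, b), by constructor <;> simp <;> omega, ?_⟩
    simp only [List.take_left, List.drop_left]
  exact Set.Finite.subset (Set.Finite.image _ (((Set.finite_Iio _).prod Set.finite_univ))) this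

lemma prefix_decomp {u₁ v₁ u₂ v₂ : List Bool} (h : u₁ ++ v₁ = u₂ ++ v₂)
    (hle : u₁.length ≤ u₂.length) : ∃ t, u₂ = u₁ ++ t ∧ v₁ = t ++ v₂ := by
  rcases List.append_eq_append_iff.1 h with ⟨t, h1, h2⟩ | ⟨t, h1, h2⟩
  · exact ⟨t, h1, h2⟩
  · have : t = [] := by
      have := congrArg List.length h1
      simp at this
      exact List.eq_nil_of_length_eq_zero (by omega)
    subst this
    simp at h1 h2
    exact ⟨[], by simp [h1], by simp [h2]⟩

/-- Common one-insertion gives common one-deletion (ordered helper). -/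
lemma common_del_aux {u₁ v₁ u₂ v₂ : List Bool} {b₁ b₂ : Bool}
    (hxy : u₁ ++ v₁ ≠ u₂ ++ v₂) (hw : u₁ ++ b₁ :: v₁ = u₂ ++ b₂ :: v₂)
    (hle : u₁.length ≤ u₂.length) :
    ∃ z, z ∈ BD (u₁ ++ v₁) ∩ BD (u₂ ++ v₂) := by
  obtain ⟨t, hu₂, hv⟩ := prefix_decomp hw hle
  cases t with
  | nil =>
    simp at hu₂
    subst hu₂
    injection hv with hb hv
    exact absurd (by rw [hv]) hxy
  | cons c t' =>
    injection hv with hb hv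
    subst hb hu₂ hv
    refine ⟨u₁ ++ t' ++ v₂, ⟨u₁ ++ t', v₂, b₂, by simp, by simp⟩, ?_⟩
    exact ⟨u₁, t' ++ v₂, b₁, by simp, by simp⟩

lemma common_del_of_common_ins {x y w : List Bool} (hxy : x ≠ y)
    (hw : w ∈ BI x ∩ BI y) : ∃ z, z ∈ BD x ∩ BD y := by
  obtain ⟨⟨u₁, v₁, b₁, rfl, hw1⟩, ⟨u₂, v₂, b₂, rfl, hw2⟩⟩ := hw
  have hw' : u₁ ++ b₁ :: v₁ = u₂ ++ b₂ :: v₂ := by rw [← hw1, ← hw2]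
  rcases le_total u₁.length u₂.length with hle | hle
  · exact common_del_aux hxy hw' hle
  · obtain ⟨z, hz1, hz2⟩ := common_del_aux (Ne.symm hxy) hw'.symm hle
    exact ⟨z, hz2, hz1⟩

/-- Common one-deletion gives common one-insertion (ordered helper). -/
lemma common_ins_aux {u₁ v₁ u₂ v₂ : List Bool} {b₁ b₂ : Bool}
    (hz : u₁ ++ v₁ = u₂ ++ v₂) (hle : u₁.length ≤ u₂.length) :
    ∃ w, w ∈ BI (u₁ ++ b₁ :: v₁) ∩ BI (u₂ ++ b₂ :: v₂) := by
  obtain ⟨t, rfl, rfl⟩ := prefix_decomp hz hle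
  refine ⟨u₁ ++ b₁ :: t ++ b₂ :: v₂, ⟨u₁ ++ b₁ :: t, v₂, b₂, by simp, by simp⟩, ?_⟩
  exact ⟨u₁, t ++ b₂ :: v₂, b₁, by simp, by simp⟩

lemma common_ins_of_common_del {x y z : List Bool}
    (hz : z ∈ BD x ∩ BD y) : ∃ w, w ∈ BI x ∩ BI y := by
  obtain ⟨⟨u₁, v₁, b₁, rfl, hz1⟩, ⟨u₂, v₂, b₂, rfl, hz2⟩⟩ := hz
  have hz' : u₁ ++ v₁ = u₂ ++ v₂ := by rw [← hz1, ← hz2]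
  rcases le_total u₁.length u₂.length with hle | hle
  · exact common_ins_aux hz' hle
  · obtain ⟨w, h1, h2⟩ := common_ins_aux hz'.symm hle
    exact ⟨w, h2, h1⟩


def delPairwise (C : Set (List Bool)) : Prop :=
  ∀ x ∈ C, ∀ y ∈ C, x ≠ y → BD x ∩ BD y = ∅

lemma recon_iff {n : ℕ} {B : List Bool → Set (List Bool)}
    (hB : B = BD ∨ B = BI ∨ B = BDI) (C : Set (List Bool)) :
    reconCode n 1 B C ↔ C ⊆ balanced n ∧ delPairwise C := by
  constructor
  · rintro ⟨hsub, hrec⟩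
    refine ⟨hsub, fun x hx y hy hxy => ?_⟩
    have hfin : (B x ∩ B y).Finite := by
      rcases hB with rfl | rfl | rfl
      · exact (BD_finite x).inter_of_left _
      · exact (BI_finite x).inter_of_left _
      · exact (((BD_finite x).union (BI_finite x)).inter_of_left _)
    have hemp : B x ∩ B y = ∅ := by
      have := hrec x hx y hy hxy
      rw [Nat.lt_one_iff] at this
      exact (Set.ncard_eq_zero hfin).1 this
    rcases hB with rfl | rfl | rfl
    · exact hemp
    · by_contra hne
      obtain ⟨z, hz⟩ := Set.nonempty_iff_ne_empty.2 hne
      obtain ⟨w, hw⟩ := common_ins_of_common_del hz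
      rw [Set.eq_empty_iff_forall_notMem] at hemp
      exact hemp w hw
    · rw [Set.eq_empty_iff_forall_notMem] at hemp ⊢
      intro z hz
      exact hemp z ⟨Or.inl hz.1, Or.inl hz.2⟩
  · rintro ⟨hsub, hdel⟩
    refine ⟨hsub, fun x hx y hy hxy => ?_⟩
    have hlx : x.length = n := (hsub hx).1
    have hly : y.length = n := (hsub hy).1
    have hBD := hdel x hx y hy hxy
    have hBI : BI x ∩ BI y = ∅ := by
      rw [Set.eq_empty_iff_forall_notMem]
      intro w hw
      obtain ⟨z, hz⟩ := common_del_of_common_ins hxy hw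
      rw [Set.eq_empty_iff_forall_notMem] at hBD
      exact hBD z hz
    have hemp : B x ∩ B y = ∅ := by
      rcases hB with rfl | rfl | rfl
      · exact hBD
      · exact hBI
      · rw [Set.eq_empty_iff_forall_notMem]
        rintro z ⟨hz1 | hz1, hz2 | hz2⟩
        · rw [Set.eq_empty_iff_forall_notMem] at hBD; exact hBD z ⟨hz1, hz2⟩
        · have h1 := BD_length hz1
          have h2 := BI_length hz2
          omega
        · have h1 := BI_length hz1
          have h2 := BD_length hz2
          omega
        · rw [Set.eq_empty_iff_forall_notMem] at hBI; exact hBI z ⟨hz1, hz2⟩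
    rw [hemp]
    simp


-- ===== numeric lemmas =====

lemma cb_sq_upper (k : ℕ) : (2*k+1) * Nat.centralBinom k ^ 2 ≤ 16 ^ k := by
  induction k with
  | zero => simp [Nat.centralBinom]
  | succ k ih =>
    have hrec := Nat.succ_mul_centralBinom_succ k
    have key : (k+1)^2 * ((2*(k+1)+1) * Nat.centralBinom (k+1) ^ 2)
        = 4*(2*k+3)*(2*k+1) * ((2*k+1) * Nat.centralBinom k ^ 2) := by
      have : ((k+1) * Nat.centralBinom (k+1))^2 = (2 * (2*k+1) * Nat.centralBinom k)^2 := by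
        rw [hrec]
      ring_nf at this ⊢
      nlinarith [this]
    have h2 : (k+1)^2 * ((2*(k+1)+1) * Nat.centralBinom (k+1) ^ 2)
        ≤ (k+1)^2 * 16^(k+1) := by
      rw [key]
      calc 4*(2*k+3)*(2*k+1) * ((2*k+1) * Nat.centralBinom k ^ 2)
          ≤ 4*(2*k+3)*(2*k+1) * 16^k := by
            exact Nat.mul_le_mul_left _ ih
        _ ≤ (16*(k+1)^2) * 16^k := by
            apply Nat.mul_le_mul_right
            nlinarith
        _ = (k+1)^2 * 16^(k+1) := by ring
    exact Nat.le_of_mul_le_mul_left h2 (by positivity)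

lemma cb_sq_lower (k : ℕ) (hk : 1 ≤ k) : 16 ^ k ≤ 4*k * Nat.centralBinom k ^ 2 := by
  induction k with
  | zero => omega
  | succ k ih =>
    rcases Nat.eq_or_lt_of_le hk with h1 | h1
    · simp [← h1]
      rw [show Nat.centralBinom 1 = 2 by decide]
      norm_num
    · have hk1 : 1 ≤ k := by omega
      have ih := ih hk1
      have hrec := Nat.succ_mul_centralBinom_succ k
      have key : (k+1)^2 * (4*(k+1) * Nat.centralBinom (k+1) ^ 2)
          = 16*(k+1)*(2*k+1)^2 * Nat.centralBinom k ^ 2 := by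
        have : ((k+1) * Nat.centralBinom (k+1))^2 = (2 * (2*k+1) * Nat.centralBinom k)^2 := by
          rw [hrec]
        nlinarith [this]
      have h2 : (k+1)^2 * 16^(k+1) ≤ (k+1)^2 * (4*(k+1) * Nat.centralBinom (k+1) ^ 2) := by
        rw [key]
        calc (k+1)^2 * 16^(k+1) = 16*(k+1)^2 * 16^k := by ring
          _ ≤ 16*(k+1)^2 * (4*k * Nat.centralBinom k ^ 2) := Nat.mul_le_mul_left _ ih
          _ ≤ 16*(k+1)*(2*k+1)^2 * Nat.centralBinom k ^ 2 := by
            rw [show 16*(k+1)^2 * (4*k * Nat.centralBinom k ^ 2)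
              = (16*(k+1)*(4*k*(k+1))) * Nat.centralBinom k ^ 2 by ring]
            apply Nat.mul_le_mul_right
            nlinarith
      exact Nat.le_of_mul_le_mul_left h2 (by positivity)

lemma choose_mono_half {m : ℕ} : ∀ d j, j + d ≤ m / 2 → m.choose j ≤ m.choose (j + d) := by
  intro d
  induction d with
  | zero => intro j _; simp
  | succ d ih =>
    intro j h
    have h1 := ih j (by omega)
    have h2 : m.choose (j+d) ≤ m.choose (j+d+1) :=
      Nat.choose_le_succ_of_lt_half_left (by omega)
    calc m.choose j ≤ m.choose (j+d) := h1
      _ ≤ m.choose (j+(d+1)) := by rw [show j+(d+1) = j+d+1 by ring]; exact h2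

lemma choose_ratio {m : ℕ} : ∀ d j, 3*(j+d) ≤ m → m.choose j * 2^d ≤ m.choose (j+d) := by
  intro d
  induction d with
  | zero => intro j _; simp
  | succ d ih =>
    intro j h
    have h1 := ih j (by omega)
    have i := j + d
    have h2 : 2 * m.choose (j+d) ≤ m.choose (j+d+1) := by
      have he := Nat.choose_succ_right_eq m (j+d)
      have h3 : 2 * m.choose (j+d) * (j+d+1) ≤ m.choose (j+d+1) * (j+d+1) := by
        rw [he]
        have : 2 * (j+d+1) ≤ m - (j+d) := by omega
        calc 2 * m.choose (j+d) * (j+d+1) = m.choose (j+d) * (2*(j+d+1)) := by ring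
          _ ≤ m.choose (j+d) * (m - (j+d)) := Nat.mul_le_mul_left _ this
      exact Nat.le_of_mul_le_mul_right h3 (by omega)
    calc m.choose j * 2^(d+1) = (m.choose j * 2^d) * 2 := by ring
      _ ≤ m.choose (j+d) * 2 := Nat.mul_le_mul_right _ h1
      _ ≤ m.choose (j+d+1) := by omega
      _ = m.choose (j+(d+1)) := by rw [show j+(d+1) = j+d+1 by ring]

lemma fifteen_le (q : ℕ) (hq : 9 ≤ q) : 15 * (q + 1) ≤ 2 ^ q := by
  induction q with
  | zero => omega
  | succ q ih =>
    rcases Nat.eq_or_lt_of_le hq with h1 | h1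
    · rw [← h1]; norm_num
    · have := ih (by omega)
      rw [pow_succ]
      omega

lemma le_two_pow_div15 {n : ℕ} (hn : 135 ≤ n) : n ≤ 2 ^ (n / 15) := by
  have hq : 9 ≤ n / 15 := by omega
  have := fifteen_le (n/15) hq
  omega

lemma cube_le_two_pow_div5 {n : ℕ} (hn : 135 ≤ n) : n ^ 3 ≤ 2 ^ (n / 5) := by
  have h1 := le_two_pow_div15 hn
  calc n^3 ≤ (2^(n/15))^3 := Nat.pow_le_pow_left h1 3
    _ = 2^(3*(n/15)) := by rw [← pow_mul, Nat.mul_comm]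
    _ ≤ 2^(n/5) := Nat.pow_le_pow_right (by norm_num) (by omega)

lemma sq_le_two_pow {n : ℕ} (hn : 4 ≤ n) : n ^ 2 ≤ 2 ^ n := by
  induction n with
  | zero => omega
  | succ n ih =>
    rcases Nat.eq_or_lt_of_le hn with h1 | h1
    · rw [← h1]; norm_num
    · have h2 := ih (by omega)
      have h4 : 4 ≤ n := by omega
      calc (n+1)^2 ≤ 2 * n^2 := by nlinarith
        _ ≤ 2 * 2^n := by omega
        _ = 2^(n+1) := by ring

lemma choose_le_two_pow (m j : ℕ) : m.choose j ≤ 2 ^ m := by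
  rcases le_or_gt j m with h | h
  · calc m.choose j ≤ ∑ i ∈ Finset.range (m+1), m.choose i :=
        Finset.single_le_sum (by intro i _; exact Nat.zero_le _) (Finset.mem_range.2 (by omega))
      _ = 2^m := Nat.sum_range_choose m
  · rw [Nat.choose_eq_zero_of_lt h]; exact Nat.zero_le _


-- ===== descents =====

def dset (x : List Bool) : Finset ℕ :=
  (Finset.range (x.length - 1)).filter (fun i => x.getD i false ≠ x.getD (i+1) false)

lemma mem_dset {x : List Bool} {i : ℕ} :
    i ∈ dset x ↔ i + 1 < x.length ∧ x.getD i false ≠ x.getD (i+1) false := by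
  simp only [dset, Finset.mem_filter, Finset.mem_range]
  constructor
  · rintro ⟨h1, h2⟩; exact ⟨by omega, h2⟩
  · rintro ⟨h1, h2⟩; exact ⟨by omega, h2⟩

lemma eraseIdx_injOn (x : List Bool) : Set.InjOn (fun i => x.eraseIdx i) (dset x) := by
  have key : ∀ i j : ℕ, i ∈ dset x → j ∈ dset x → i < j → x.eraseIdx i ≠ x.eraseIdx j := by
    intro i j hi hj hij heq
    obtain ⟨hi1, hi2⟩ := mem_dset.1 hi
    obtain ⟨hj1, _⟩ := mem_dset.1 hj
    have hleni : (x.eraseIdx i).length = x.length - 1 := by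
      rw [List.length_eraseIdx]; simp [show i < x.length by omega]
    have hlenj : (x.eraseIdx j).length = x.length - 1 := by
      rw [List.length_eraseIdx]; simp [show j < x.length by omega]
    have hilt : i < (x.eraseIdx i).length := by omega
    have hilt' : i < (x.eraseIdx j).length := by omega
    have e1 : (x.eraseIdx i)[i] = x[i+1]'(by omega) := by
      rw [List.getElem_eraseIdx]
      simp
    have e2 : (x.eraseIdx j)[i] = x[i]'(by omega) := by
      rw [List.getElem_eraseIdx]
      simp [hij]
    have : (x.eraseIdx i)[i] = (x.eraseIdx j)[i] := by
      simp only [heq]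
    rw [e1, e2] at this
    apply hi2
    rw [List.getD_eq_getElem _ _ (by omega : i < x.length),
      List.getD_eq_getElem _ _ (by omega : i + 1 < x.length)]
    rw [this]
  intro i hi j hj heq
  by_contra hne
  rcases Nat.lt_or_ge i j with h | h
  · exact key i j hi hj h heq
  · exact key j i hj hi (by omega) heq.symm

lemma eq_of_dset_eq {x y : List Bool} (hlen : x.length = y.length)
    (h0 : x.getD 0 false = y.getD 0 false) (hd : dset x = dset y) : x = y := by
  have main : ∀ i (h1 : i < x.length), x[i] = y[i]'(by omega) := by
    intro i
    induction i with
    | zero =>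
      intro h1
      rwa [List.getD_eq_getElem _ _ h1, List.getD_eq_getElem _ _ (by omega)] at h0
    | succ i ih =>
      intro h1
      have hi : i < x.length := by omega
      have hxy := ih hi
      have hmem : (i ∈ dset x) = (i ∈ dset y) := by rw [hd]
      simp only [mem_dset, hlen] at hmem
      have hmem' : (x.getD i false ≠ x.getD (i+1) false) ↔
          (y.getD i false ≠ y.getD (i+1) false) := by
        constructor
        · intro h; exact ((iff_of_eq hmem).1 ⟨by omega, h⟩).2
        · intro h; exact ((iff_of_eq hmem).2 ⟨by omega, h⟩).2
      rw [List.getD_eq_getElem _ _ hi, List.getD_eq_getElem _ _ h1,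
        List.getD_eq_getElem _ _ (show i < y.length by omega),
        List.getD_eq_getElem _ _ (show i+1 < y.length by omega)] at hmem'
      revert hmem'
      rw [hxy]
      rcases Bool.eq_false_or_eq_true (y[i]'(by omega)) with h | h <;>
        rcases Bool.eq_false_or_eq_true (x[i+1]'h1) with h2 | h2 <;>
        rcases Bool.eq_false_or_eq_true (y[i+1]'(by omega)) with h3 | h3 <;>
        simp [h, h2, h3]
  exact List.ext_getElem hlen (fun i h1 _ => main i h1)

lemma dcard_eq_filter_card_le (n j : ℕ) :
    ((W n (n/2)).filter (fun x => (dset x).card = j)).card ≤ 2 * (n-1).choose j := by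
  classical
  have := Finset.card_le_card_of_injOn
    (f := fun x : List Bool => (x.getD 0 false, dset x))
    (s := (W n (n/2)).filter (fun x => (dset x).card = j))
    (t := (Finset.univ : Finset Bool) ×ˢ Finset.powersetCard j (Finset.range (n-1)))
    ?_ ?_
  · calc ((W n (n/2)).filter (fun x => (dset x).card = j)).card
        ≤ ((Finset.univ : Finset Bool) ×ˢ Finset.powersetCard j (Finset.range (n-1))).card := this
      _ = 2 * (n-1).choose j := by
        rw [Finset.card_product, Finset.card_powersetCard, Finset.card_range]
        simp
  · intro x hx
    obtain ⟨hxW, hxd⟩ := Finset.mem_filter.1 hx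
    obtain ⟨hxl, _⟩ := (mem_W _ _ _).1 hxW
    simp only [Finset.mem_coe, Finset.mem_product, Finset.mem_univ, true_and, Finset.mem_powersetCard]
    refine ⟨?_, hxd⟩
    intro i hi
    obtain ⟨h1, _⟩ := mem_dset.1 hi
    simp only [Finset.mem_range]
    omega
  · intro x hx y hy hxy
    obtain ⟨hxW, _⟩ := Finset.mem_filter.1 (by exact_mod_cast hx)
    obtain ⟨hyW, _⟩ := Finset.mem_filter.1 (by exact_mod_cast hy)
    obtain ⟨hxl, _⟩ := (mem_W _ _ _).1 hxW
    obtain ⟨hyl, _⟩ := (mem_W _ _ _).1 hyW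
    have h1 : x.getD 0 false = y.getD 0 false := congrArg Prod.fst hxy
    have h2 : dset x = dset y := congrArg Prod.snd hxy
    exact eq_of_dset_eq (by omega) h1 h2

lemma bd_count {x z : List Bool} (h : z ∈ BD x) :
    z.count true = x.count true ∨ z.count true + 1 = x.count true := by
  obtain ⟨u, v, b, rfl, rfl⟩ := h
  cases b <;> simp [List.count_append, List.count_cons] <;> omega

/-- Sphere-packing: sum of descent counts over a deletion code is at most `C(n, n/2)`. -/
lemma sum_dset_card_le {n : ℕ} (hn2 : 2 ≤ n) (F : Finset (List Bool))
    (hsub : ∀ x ∈ F, x ∈ W n (n/2))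
    (hdisj : ∀ x ∈ F, ∀ y ∈ F, x ≠ y → BD x ∩ BD y = ∅) :
    ∑ x ∈ F, (dset x).card ≤ n.choose (n/2) := by
  classical
  set WV : Finset (List Bool) := W (n-1) (n/2) ∪ W (n-1) (n/2 - 1) with hWV
  set E : List Bool → Finset (List Bool) := fun x => (dset x).image (fun i => x.eraseIdx i)
    with hE
  have hEsub : ∀ x ∈ F, ∀ z ∈ E x, z ∈ BD x := by
    intro x hx z hz
    obtain ⟨i, hi, rfl⟩ := Finset.mem_image.1 hz
    obtain ⟨h1, _⟩ := mem_dset.1 hi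
    exact eraseIdx_mem_BD (by omega)
  have hcard : ∀ x ∈ F, (E x).card = (dset x).card := by
    intro x hx
    exact Finset.card_image_of_injOn (eraseIdx_injOn x)
  have hdisjE : ∀ x ∈ F, ∀ y ∈ F, x ≠ y → Disjoint (E x) (E y) := by
    intro x hx y hy hxy
    rw [Finset.disjoint_left]
    intro z hzx hzy
    have h1 := hEsub x hx z hzx
    have h2 := hEsub y hy z hzy
    have := hdisj x hx y hy hxy
    rw [Set.eq_empty_iff_forall_notMem] at this
    exact this z ⟨h1, h2⟩
  have hsubWV : F.biUnion E ⊆ WV := by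
    intro z hz
    obtain ⟨x, hx, hzx⟩ := Finset.mem_biUnion.1 hz
    have hzBD := hEsub x hx z hzx
    obtain ⟨hxl, hxc⟩ := (mem_W _ _ _).1 (hsub x hx)
    have hlen := BD_length hzBD
    have hcnt := bd_count hzBD
    simp only [hWV, Finset.mem_union, mem_W]
    rcases hcnt with h | h
    · left; exact ⟨by omega, by omega⟩
    · right; exact ⟨by omega, by omega⟩
  calc ∑ x ∈ F, (dset x).card = ∑ x ∈ F, (E x).card := by
        apply Finset.sum_congr rfl
        intro x hx
        exact (hcard x hx).symm
    _ = (F.biUnion E).card := (Finset.card_biUnion hdisjE).symm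
    _ ≤ WV.card := Finset.card_le_card hsubWV
    _ ≤ (W (n-1) (n/2)).card + (W (n-1) (n/2 - 1)).card := Finset.card_union_le _ _
    _ = (n-1).choose (n/2) + (n-1).choose (n/2 - 1) := by rw [card_W, card_W]
    _ = n.choose (n/2) := by
        have := Nat.choose_succ_succ' (n-1) (n/2 - 1)
        have h1 : n - 1 + 1 = n := by omega
        have h2 : n/2 - 1 + 1 = n/2 := by omega
        rw [h1, h2] at this
        omega


/-- Any balanced single-deletion code has size ≤ small + big with explicit bounds. -/
lemma code_card_nat {n : ℕ} (hn : 1000 ≤ n) (F : Finset (List Bool))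
    (hsub : ∀ x ∈ F, x ∈ W n (n/2))
    (hdisj : ∀ x ∈ F, ∀ y ∈ F, x ≠ y → BD x ∩ BD y = ∅) :
    ∃ s b : ℕ, F.card = s + b ∧ s * n^2 ≤ 2^n ∧ b * (n/8) ≤ n.choose (n/2) := by
  classical
  set k := n/8 with hk
  refine ⟨(F.filter fun x => (dset x).card < k).card,
    (F.filter fun x => ¬((dset x).card < k)).card,
    (Finset.card_filter_add_card_filter_not _).symm, ?_, ?_⟩
  · -- small part
    set s := (F.filter fun x => (dset x).card < k).card with hs
    set t := (n-1)/3 with ht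
    have h1 : s ≤ ((W n (n/2)).filter fun x => (dset x).card < k).card := by
      apply Finset.card_le_card
      intro x hx
      obtain ⟨hx1, hx2⟩ := Finset.mem_filter.1 hx
      exact Finset.mem_filter.2 ⟨hsub x hx1, hx2⟩
    have h2 : ((W n (n/2)).filter fun x => (dset x).card < k)
        ⊆ (Finset.range k).biUnion (fun j => (W n (n/2)).filter fun x => (dset x).card = j) := by
      intro x hx
      obtain ⟨hx1, hx2⟩ := Finset.mem_filter.1 hx
      exact Finset.mem_biUnion.2 ⟨(dset x).card, Finset.mem_range.2 hx2,
        Finset.mem_filter.2 ⟨hx1, rfl⟩⟩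
    have h3 : s ≤ ∑ j ∈ Finset.range k, 2 * (n-1).choose j := by
      calc s ≤ _ := h1
        _ ≤ _ := Finset.card_le_card h2
        _ ≤ ∑ j ∈ Finset.range k, ((W n (n/2)).filter fun x => (dset x).card = j).card :=
          Finset.card_biUnion_le
        _ ≤ ∑ j ∈ Finset.range k, 2 * (n-1).choose j :=
          Finset.sum_le_sum (fun j _ => dcard_eq_filter_card_le n j)
    have h4 : s ≤ k * (2 * (n-1).choose k) := by
      calc s ≤ ∑ j ∈ Finset.range k, 2 * (n-1).choose j := h3
        _ ≤ ∑ _j ∈ Finset.range k, 2 * (n-1).choose k := by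
          apply Finset.sum_le_sum
          intro j hj
          have hjk := Finset.mem_range.1 hj
          have := choose_mono_half (m := n-1) (k - j) j (by omega)
          rw [show j + (k - j) = k by omega] at this
          omega
        _ = k * (2 * (n-1).choose k) := by rw [Finset.sum_const, Finset.card_range]; simp
    -- multiply by 2^(t-k)
    have h5 : (n-1).choose k * 2^(t-k) ≤ (n-1).choose t := by
      have := choose_ratio (m := n-1) (t - k) k (by omega)
      rwa [show k + (t - k) = t by omega] at this
    have h6 : s * 2^(t-k) ≤ n * 2^n := by
      calc s * 2^(t-k) ≤ (k * (2 * (n-1).choose k)) * 2^(t-k) := Nat.mul_le_mul_right _ h4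
        _ = 2 * k * ((n-1).choose k * 2^(t-k)) := by ring
        _ ≤ 2 * k * (n-1).choose t := Nat.mul_le_mul_left _ h5
        _ ≤ 2 * k * 2^(n-1) := Nat.mul_le_mul_left _ (choose_le_two_pow _ _)
        _ ≤ n * 2^(n-1) := by
          have : 2 * k ≤ n := by omega
          exact Nat.mul_le_mul_right _ this
        _ ≤ n * 2^n := Nat.mul_le_mul_left _ (Nat.pow_le_pow_right (by norm_num) (by omega))
    have h7 : n^3 ≤ 2^(t-k) := by
      calc n^3 ≤ 2^(n/5) := cube_le_two_pow_div5 (by omega)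
        _ ≤ 2^(t-k) := Nat.pow_le_pow_right (by norm_num) (by omega)
    have h8 : s * n^2 * n ≤ 2^n * n := by
      calc s * n^2 * n = s * n^3 := by ring
        _ ≤ s * 2^(t-k) := Nat.mul_le_mul_left _ h7
        _ ≤ n * 2^n := h6
        _ = 2^n * n := by ring
    exact Nat.le_of_mul_le_mul_right h8 (by omega)
  · -- big part
    set Fb := F.filter fun x => ¬((dset x).card < k) with hFb
    have h1 : Fb.card • k ≤ ∑ x ∈ Fb, (dset x).card := by
      apply Finset.card_nsmul_le_sum
      intro x hx
      have := (Finset.mem_filter.1 hx).2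
      omega
    have h2 : ∑ x ∈ Fb, (dset x).card ≤ ∑ x ∈ F, (dset x).card := by
      apply Finset.sum_le_sum_of_subset (Finset.filter_subset _ _)
    have h3 := sum_dset_card_le (by omega) F hsub hdisj
    calc Fb.card * k = Fb.card • k := by simp
      _ ≤ n.choose (n/2) := le_trans h1 (le_trans h2 h3)

/-- Pigeonhole: some VT residue class is large. -/
lemma exists_good_a (n : ℕ) : ∃ a, a < n + 1 ∧
    n.choose (n/2) ≤ (n+1) * ((W n (n/2)).filter fun x => vtSum x % (n+1) = a).card := by
  classical
  have hfib : (W n (n/2)).card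
      = ∑ a ∈ Finset.range (n+1), ((W n (n/2)).filter fun x => vtSum x % (n+1) = a).card := by
    apply Finset.card_eq_sum_card_fiberwise
    intro x _
    exact Finset.mem_range.2 (Nat.mod_lt _ (by omega))
  obtain ⟨a, ha, hmax⟩ := Finset.exists_max_image (Finset.range (n+1))
    (fun a => ((W n (n/2)).filter fun x => vtSum x % (n+1) = a).card)
    ⟨0, Finset.mem_range.2 (by omega)⟩
  refine ⟨a, Finset.mem_range.1 ha, ?_⟩
  calc n.choose (n/2) = (W n (n/2)).card := (card_W n (n/2)).symm
    _ = ∑ b ∈ Finset.range (n+1), ((W n (n/2)).filter fun x => vtSum x % (n+1) = b).card := hfib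
    _ ≤ (Finset.range (n+1)).card • ((W n (n/2)).filter fun x => vtSum x % (n+1) = a).card :=
      Finset.sum_le_card_nsmul _ _ _ (fun b hb => hmax b hb)
    _ = (n+1) * ((W n (n/2)).filter fun x => vtSum x % (n+1) = a).card := by
      rw [Finset.card_range]; simp


-- ===== final assembly =====
lemma balanced_finite (n : ℕ) : (balanced n).Finite := by
  rw [balanced_eq_W]; exact (W n (n/2)).finite_toSet

lemma logb_two_pow (n : ℕ) : Real.logb 2 ((2:ℝ)^n) = n := by
  rw [Real.logb_pow, Real.logb_self_eq_one (by norm_num)]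
  simp

lemma logb_sqrt {x : ℝ} (hx : 0 ≤ x) : Real.logb 2 (Real.sqrt x) = Real.logb 2 x / 2 := by
  rw [Real.logb, Real.logb, Real.log_sqrt hx]
  ring

/-- The defining set of `rho n 1 B`. -/
def Sset (n : ℕ) (B : List Bool → Set (List Bool)) : Set ℝ :=
  {r : ℝ | ∃ C : Set (List Bool),
    reconCode n 1 B C ∧ r = (n : ℝ) - Real.logb 2 (C.ncard : ℝ)}

lemma rho_eq (n : ℕ) (B : List Bool → Set (List Bool)) : rho n 1 B = sInf (Sset n B) := rfl

lemma Sset_nonempty (n : ℕ) (B : List Bool → Set (List Bool)) : (Sset n B).Nonempty := by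
  refine ⟨(n : ℝ) - Real.logb 2 (((∅ : Set (List Bool)).ncard : ℕ) : ℝ), ∅, ⟨?_, ?_⟩, rfl⟩
  · exact Set.empty_subset _
  · intro x hx; cases hx

lemma Sset_bddBelow (n : ℕ) (B : List Bool → Set (List Bool)) : BddBelow (Sset n B) := by
  refine ⟨0, ?_⟩
  rintro r ⟨C, ⟨hsub, _⟩, rfl⟩
  have hM : C.ncard ≤ 2^n := by
    calc C.ncard ≤ (balanced n).ncard :=
          Set.ncard_le_ncard hsub (balanced_finite n)
      _ = (W n (n/2)).card := by rw [balanced_eq_W, Set.ncard_coe_finset]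
      _ = n.choose (n/2) := card_W n (n/2)
      _ ≤ 2^n := choose_le_two_pow n (n/2)
  have hlogb : Real.logb 2 (C.ncard : ℝ) ≤ n := by
    rcases Nat.eq_zero_or_pos C.ncard with h0 | h0
    · rw [h0, Nat.cast_zero, Real.logb_zero]; positivity
    · calc Real.logb 2 (C.ncard : ℝ) ≤ Real.logb 2 ((2:ℝ)^n) := by
            apply (Real.logb_le_logb (by norm_num) (by exact_mod_cast h0) (by positivity)).2
            exact_mod_cast hM
        _ = n := logb_two_pow n
  linarith

lemma choose_eq_centralBinom {n : ℕ} (hn : Even n) :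
    n.choose (n/2) = Nat.centralBinom (n/2) := by
  unfold Nat.centralBinom
  congr 1
  obtain ⟨m, rfl⟩ := hn
  omega

lemma sixteen_pow {n : ℕ} (hn : Even n) : (16:ℕ)^(n/2) = 4^n := by
  obtain ⟨m, rfl⟩ := hn
  rw [show (m+m)/2 = m by omega, show m + m = 2*m by ring, pow_mul]
  norm_num

/-- Lower bound: every element of the redundancy set is large. -/
lemma lower_bound {n : ℕ} (hn : Even n) (hn0 : 1024 ≤ n)
    {B : List Bool → Set (List Bool)} (hB : B = BD ∨ B = BI ∨ B = BDI) :
    ∀ r ∈ Sset n B, (3/2) * Real.logb 2 (n : ℝ) - Real.logb 2 17 ≤ r := by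
  rintro r ⟨C, hrec, rfl⟩
  obtain ⟨hsub, hdel⟩ := (recon_iff hB C).1 hrec
  have hCfin : C.Finite := (balanced_finite n).subset hsub
  set F := hCfin.toFinset with hF
  have hmemF : ∀ x, x ∈ F ↔ x ∈ C := fun x => hCfin.mem_toFinset
  have hFsub : ∀ x ∈ F, x ∈ W n (n/2) := by
    intro x hx
    have := hsub ((hmemF x).1 hx)
    rw [balanced_eq_W] at this
    exact_mod_cast this
  have hFdisj : ∀ x ∈ F, ∀ y ∈ F, x ≠ y → BD x ∩ BD y = ∅ := by
    intro x hx y hy hxy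
    exact hdel x ((hmemF x).1 hx) y ((hmemF y).1 hy) hxy
  obtain ⟨s, b, hcard, hs, hb⟩ := code_card_nat (by omega) F hFsub hFdisj
  have hMF : C.ncard = F.card := Set.ncard_eq_toFinset_card C hCfin
  have hn1 : (1:ℝ) ≤ (n:ℝ) := by exact_mod_cast (by omega : 1 ≤ n)
  have hnpos : (0:ℝ) < n := by linarith
  -- central binomial upper bound, real form
  have hch : n * (n.choose (n/2))^2 ≤ 4^n := by
    have h1 := cb_sq_upper (n/2)
    rw [← choose_eq_centralBinom hn] at h1
    calc n * (n.choose (n/2))^2 ≤ (2*(n/2)+1) * (n.choose (n/2))^2 := by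
          apply Nat.mul_le_mul_right; omega
      _ ≤ 16^(n/2) := h1
      _ = 4^n := sixteen_pow hn
  have hchR : (n.choose (n/2) : ℝ) * Real.sqrt n ≤ 2^n := by
    have e : (n.choose (n/2) : ℝ) * Real.sqrt n
        = Real.sqrt ((n.choose (n/2):ℝ)^2 * n) := by
      rw [Real.sqrt_mul (by positivity), Real.sqrt_sq (by positivity)]
    rw [e]
    have h2 : ((n.choose (n/2):ℝ))^2 * n ≤ ((2:ℝ)^n)^2 := by
      have : ((2:ℝ)^n)^2 = 4^n := by
        rw [← pow_mul, mul_comm, pow_mul]; norm_num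
      rw [this]
      have hchRR : ((n:ℝ)) * ((n.choose (n/2):ℝ))^2 ≤ 4^n := by exact_mod_cast hch
      nlinarith [hchRR]
    calc Real.sqrt ((n.choose (n/2):ℝ)^2 * n) ≤ Real.sqrt (((2:ℝ)^n)^2) :=
          Real.sqrt_le_sqrt h2
      _ = (2:ℝ)^n := Real.sqrt_sq (by positivity)
  -- small part
  have hsR : (s:ℝ) * ((n:ℝ) * Real.sqrt n) ≤ 2^n := by
    have h1 : (s:ℝ) * (n:ℝ)^2 ≤ 2^n := by exact_mod_cast hs
    have h2 : Real.sqrt n ≤ (n:ℝ) := by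
      rw [Real.sqrt_le_left (le_of_lt hnpos)]
      nlinarith
    have h3 : (s:ℝ)*(n:ℝ)*Real.sqrt n ≤ (s:ℝ)*(n:ℝ)*(n:ℝ) :=
      mul_le_mul_of_nonneg_left h2 (by positivity)
    calc (s:ℝ)*((n:ℝ)*Real.sqrt n) = (s:ℝ)*(n:ℝ)*Real.sqrt n := by ring
      _ ≤ (s:ℝ)*(n:ℝ)*(n:ℝ) := h3
      _ = (s:ℝ)*(n:ℝ)^2 := by ring
      _ ≤ 2^n := h1
  -- big part
  have hbn : b * n ≤ 16 * (n.choose (n/2)) := by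
    have h1 : n ≤ 16 * (n/8) := by omega
    calc b * n ≤ b * (16*(n/8)) := Nat.mul_le_mul_left _ h1
      _ = 16 * (b * (n/8)) := by ring
      _ ≤ 16 * n.choose (n/2) := Nat.mul_le_mul_left _ hb
  have hbR : (b:ℝ) * ((n:ℝ) * Real.sqrt n) ≤ 16 * 2^n := by
    have h1 : (b:ℝ) * (n:ℝ) ≤ 16 * (n.choose (n/2) : ℝ) := by exact_mod_cast hbn
    calc (b:ℝ)*((n:ℝ)*Real.sqrt n) = ((b:ℝ)*(n:ℝ))*Real.sqrt n := by ring
      _ ≤ (16*(n.choose (n/2):ℝ))*Real.sqrt n :=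
          mul_le_mul_of_nonneg_right h1 (Real.sqrt_nonneg _)
      _ = 16*((n.choose (n/2):ℝ)*Real.sqrt n) := by ring
      _ ≤ 16*2^n := by linarith [hchR]
  have htot : (C.ncard:ℝ) * ((n:ℝ)*Real.sqrt n) ≤ 17 * 2^n := by
    have he : (C.ncard:ℝ) = (s:ℝ) + (b:ℝ) := by
      rw [hMF]; exact_mod_cast hcard
    rw [he, add_mul]; linarith
  -- conclude
  rcases Nat.eq_zero_or_pos C.ncard with h0 | h0
  · rw [h0, Nat.cast_zero, Real.logb_zero, sub_zero]
    have h17 : 0 ≤ Real.logb 2 17 := Real.logb_nonneg (by norm_num) (by norm_num)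
    have hsq : ((n:ℝ))^2 ≤ (2:ℝ)^n := by exact_mod_cast sq_le_two_pow (by omega : 4 ≤ n)
    have h2 : 2 * Real.logb 2 (n:ℝ) ≤ n := by
      have h3 := (Real.logb_le_logb (show (1:ℝ) < 2 by norm_num) (by positivity)
        (by positivity)).2 hsq
      rw [Real.logb_pow, logb_two_pow] at h3
      push_cast at h3
      linarith
    linarith
  · have h1 : (1:ℝ) ≤ (C.ncard:ℝ) := by exact_mod_cast h0
    have hsqrt_pos : 0 < Real.sqrt n := Real.sqrt_pos.2 hnpos
    have hlog1 : Real.logb 2 ((C.ncard:ℝ)*((n:ℝ)*Real.sqrt n)) ≤ Real.logb 2 (17*2^n) :=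
      (Real.logb_le_logb (by norm_num) (by positivity) (by positivity)).2 htot
    have e1 : Real.logb 2 ((C.ncard:ℝ)*((n:ℝ)*Real.sqrt n))
        = Real.logb 2 (C.ncard:ℝ) + Real.logb 2 (n:ℝ) + Real.logb 2 (n:ℝ) / 2 := by
      rw [Real.logb_mul (by positivity) (by positivity),
        Real.logb_mul (by positivity) (by positivity), logb_sqrt (le_of_lt hnpos)]
      ring
    have e2 : Real.logb 2 ((17:ℝ)*2^n) = Real.logb 2 17 + n := by
      rw [Real.logb_mul (by norm_num) (by positivity), logb_two_pow]
    rw [e1, e2] at hlog1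
    linarith

/-- Upper bound via the balanced VT code. -/
lemma upper_bound {n : ℕ} (hn : Even n) (hn0 : 1024 ≤ n)
    {B : List Bool → Set (List Bool)} (hB : B = BD ∨ B = BI ∨ B = BDI) :
    rho n 1 B ≤ (3/2) * Real.logb 2 (n:ℝ) + 2 := by
  classical
  obtain ⟨a, ha, hbig⟩ := exists_good_a n
  set Fib := (W n (n/2)).filter (fun x => vtSum x % (n+1) = a) with hFib
  have hcoe : BVT n a = ↑Fib := by
    ext x
    simp only [BVT, Set.mem_setOf_eq, hFib, Finset.coe_filter, balanced_eq_W,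
      Finset.mem_coe, mem_W, Nat.ModEq]
    rw [Nat.mod_eq_of_lt ha]
  have hrec : reconCode n 1 B (BVT n a) := by
    apply (recon_iff hB _).2
    refine ⟨fun x hx => hx.1, fun x hx y hy hxy => bvt_del_disjoint hx hy hxy⟩
  have hmem : (n:ℝ) - Real.logb 2 (((BVT n a).ncard : ℕ) : ℝ) ∈ Sset n B := ⟨_, hrec, rfl⟩
  have hrho : rho n 1 B ≤ (n:ℝ) - Real.logb 2 (((BVT n a).ncard : ℕ) : ℝ) := by
    rw [rho_eq]
    exact csInf_le (Sset_bddBelow n B) hmem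
  set M := Fib.card with hMdef
  have hM : (BVT n a).ncard = M := by rw [hcoe, Set.ncard_coe_finset]
  have hch_pos : 0 < n.choose (n/2) := Nat.choose_pos (by omega)
  have hM1 : 1 ≤ M := by
    rcases Nat.eq_zero_or_pos M with h0 | h0
    · rw [h0, Nat.mul_zero] at hbig; omega
    · exact h0
  have hn1 : (1:ℝ) ≤ (n:ℝ) := by exact_mod_cast (by omega : 1 ≤ n)
  have hnpos : (0:ℝ) < n := by linarith
  -- central binomial lower bound, real form
  have h3 : 4^n ≤ 2*n*(n.choose (n/2))^2 := by
    have h1 := cb_sq_lower (n/2) (by omega)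
    rw [← choose_eq_centralBinom hn] at h1
    have h4 : 4*(n/2) = 2*n := by
      obtain ⟨m, rfl⟩ := hn; omega
    calc 4^n = 16^(n/2) := (sixteen_pow hn).symm
      _ ≤ 4*(n/2) * (n.choose (n/2))^2 := h1
      _ = 2*n*(n.choose (n/2))^2 := by rw [h4]
  have hchlow : (2:ℝ)^n ≤ Real.sqrt (2*(n:ℝ)) * (n.choose (n/2) : ℝ) := by
    have e : Real.sqrt (2*(n:ℝ)) * (n.choose (n/2) : ℝ)
        = Real.sqrt (2*(n:ℝ) * ((n.choose (n/2):ℝ))^2) := by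
      rw [Real.sqrt_mul (by positivity : (0:ℝ) ≤ 2*(n:ℝ)) (((n.choose (n/2):ℝ))^2),
        Real.sqrt_sq (by positivity : (0:ℝ) ≤ ((n.choose (n/2)):ℝ))]
    rw [e]
    have h5 : ((2:ℝ)^n)^2 ≤ 2*(n:ℝ) * ((n.choose (n/2):ℝ))^2 := by
      have : ((2:ℝ)^n)^2 = 4^n := by rw [← pow_mul, mul_comm, pow_mul]; norm_num
      rw [this]
      exact_mod_cast h3
    calc (2:ℝ)^n = Real.sqrt (((2:ℝ)^n)^2) := (Real.sqrt_sq (by positivity)).symm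
      _ ≤ _ := Real.sqrt_le_sqrt h5
  have hMlow : (2:ℝ)^n ≤ Real.sqrt (2*(n:ℝ)) * (((n:ℝ)+1) * (M:ℝ)) := by
    have h6 : (n.choose (n/2) : ℝ) ≤ ((n:ℝ)+1)*(M:ℝ) := by exact_mod_cast hbig
    calc (2:ℝ)^n ≤ Real.sqrt (2*(n:ℝ)) * (n.choose (n/2) : ℝ) := hchlow
      _ ≤ Real.sqrt (2*(n:ℝ)) * (((n:ℝ)+1)*(M:ℝ)) :=
          mul_le_mul_of_nonneg_left h6 (Real.sqrt_nonneg _)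
  have hMpos : (0:ℝ) < (M:ℝ) := by exact_mod_cast hM1
  have hlog : (n:ℝ) ≤ Real.logb 2 (Real.sqrt (2*(n:ℝ)) * (((n:ℝ)+1) * (M:ℝ))) := by
    have h7 := (Real.logb_le_logb (show (1:ℝ) < 2 by norm_num) (by positivity)
      (by positivity)).2 hMlow
    rwa [logb_two_pow] at h7
  have e2 : Real.logb 2 (2*(n:ℝ)) = 1 + Real.logb 2 (n:ℝ) := by
    rw [Real.logb_mul (by norm_num) (ne_of_gt hnpos), Real.logb_self_eq_one (by norm_num)]
  have e1 : Real.logb 2 (Real.sqrt (2*(n:ℝ)) * (((n:ℝ)+1) * (M:ℝ)))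
      = Real.logb 2 (2*(n:ℝ))/2 + Real.logb 2 ((n:ℝ)+1) + Real.logb 2 (M:ℝ) := by
    rw [Real.logb_mul (by positivity) (by positivity),
      Real.logb_mul (by positivity) (by positivity), logb_sqrt (by positivity)]
    ring
  have e3 : Real.logb 2 ((n:ℝ)+1) ≤ 1 + Real.logb 2 (n:ℝ) := by
    have h8 : ((n:ℝ)+1) ≤ 2*(n:ℝ) := by linarith
    have h9 := (Real.logb_le_logb (show (1:ℝ) < 2 by norm_num) (by positivity)
      (by positivity)).2 h8
    rwa [e2] at h9
  rw [e1, e2] at hlog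
  have hfin : (n:ℝ) - Real.logb 2 ((M:ℕ):ℝ) ≤ (3/2) * Real.logb 2 (n:ℝ) + 2 := by
    linarith
  rw [hM] at hrho
  linarith [hrho, hfin]


/-- Theorem: for `B ∈ {B^D, B^I, B^DI}`, `ρ_b(n,1;B) = (3/2)·log₂ n + Θ(1)`. -/
theorem stmt1 :
    ∀ B ∈ ({BD, BI, BDI} : Set (List Bool → Set (List Bool))),
      ∃ c1 c2 : ℝ, ∃ n0 : ℕ, Even n0 ∧ ∀ n : ℕ, Even n → n0 ≤ n →
        (3 / 2) * Real.logb 2 (n : ℝ) + c1 ≤ rho n 1 B ∧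
        rho n 1 B ≤ (3 / 2) * Real.logb 2 (n : ℝ) + c2 := by
  intro B hB
  have hB' : B = BD ∨ B = BI ∨ B = BDI := by
    simpa [Set.mem_insert_iff, Set.mem_singleton_iff] using hB
  refine ⟨-(Real.logb 2 17), 2, 1024, ⟨512, rfl⟩, ?_⟩
  intro n hn hn0
  constructor
  · have hlb := lower_bound hn hn0 hB'
    rw [rho_eq]
    apply le_csInf (Sset_nonempty n B)
    intro r hr
    have := hlb r hr
    linarith
  · exact upper_bound hn hn0 hB'

end BRC
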